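/- Every 2-coloring of the edges of the complete bipartite graph K_{ℕ,ℕ} admits a partition of its vertex set into a finite set and two sets X and Y, where X is infinitely linked in one color and Y is infinitely linked in one color. -/

import Mathlib

set_option maxHeartbeats 1000000
/-- The subgraph of the complete bipartite graph `K_{ℕ,ℕ}` (parts: evens and odds)
consisting of the edges of color `col` in the 2-coloring `c`. -/
def bipColorGraph (c : ℕ → ℕ → Bool) (col : Bool) : SimpleGraph ℕ :=
  SimpleGraph.fromRel (fun u v => u % 2 ≠ v % 2 ∧ c u v = col)

/-- `S` is infinitely linked in `G`: every two distinct vertices of `S` are joined by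
infinitely many pairwise internally vertex-disjoint paths in `G`. -/
def InfLinked (G : SimpleGraph ℕ) (S : Set ℕ) : Prop :=
  ∀ u ∈ S, ∀ v ∈ S, u ≠ v → ∃ P : ℕ → G.Walk u v,
    (∀ n, (P n).IsPath) ∧
    ∀ m n, m ≠ n → ∀ x, x ∈ (P m).support → x ∈ (P n).support → x = u ∨ x = v

namespace Stmt12
open SimpleGraph

def PairLinked (G : SimpleGraph ℕ) (u v : ℕ) : Prop :=
  ∃ P : ℕ → G.Walk u v, (∀ n, (P n).IsPath) ∧
    ∀ m n, m ≠ n → ∀ x, x ∈ (P m).support → x ∈ (P n).support → x = u ∨ x = v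

lemma PairLinked.symm {G : SimpleGraph ℕ} {u v : ℕ} (h : PairLinked G u v) :
    PairLinked G v u := by
  obtain ⟨P, h1, h2⟩ := h
  refine ⟨fun n => (P n).reverse, fun n => (h1 n).reverse, ?_⟩
  intro m n hmn x hxm hxn
  rw [Walk.support_reverse, List.mem_reverse] at hxm hxn
  exact (h2 m n hmn x hxm hxn).symm

lemma master {G : SimpleGraph ℕ} {u v : ℕ}
    (h : ∀ s : Finset ℕ, ∃ p : G.Walk u v, p.IsPath ∧
      ∀ x ∈ p.support, x ≠ u → x ≠ v → x ∉ s) :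
    PairLinked G u v := by
  choose p hp ha using h
  let s : ℕ → Finset ℕ := fun n => Nat.rec ∅ (fun _ sk => sk ∪ (p sk).support.toFinset) n
  have hs : ∀ n, s (n + 1) = s n ∪ (p (s n)).support.toFinset := fun n => rfl
  have hmono : ∀ {m n : ℕ}, m ≤ n → s m ⊆ s n := by
    intro m n hmn
    induction hmn with
    | refl => exact subset_rfl
    | step _ ih => exact ih.trans (by rw [hs]; exact Finset.subset_union_left)
  have key : ∀ {m n : ℕ}, m < n → ∀ x, x ∈ (p (s m)).support → x ∈ (p (s n)).support →
      x = u ∨ x = v := by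
    intro m n hmn x hxm hxn
    by_contra hx
    push_neg at hx
    have h1 : x ∈ s (m + 1) := by
      rw [hs]; exact Finset.mem_union_right _ (List.mem_toFinset.2 hxm)
    exact ha (s n) x hxn hx.1 hx.2 (hmono hmn h1)
  refine ⟨fun n => p (s n), fun n => hp _, ?_⟩
  intro m n hmn x hxm hxn
  rcases hmn.lt_or_gt with h' | h'
  · exact key h' x hxm hxn
  · exact (key h' x hxn hxm)

lemma adjc {c : ℕ → ℕ → Bool} {col : Bool} {x y : ℕ} (hxy : x % 2 ≠ y % 2)
    (h : c x y = col ∨ c y x = col) : (bipColorGraph c col).Adj x y := by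
  have hne : x ≠ y := fun h' => hxy (by rw [h'])
  rw [bipColorGraph, SimpleGraph.fromRel_adj]
  rcases h with h | h
  · exact ⟨hne, Or.inl ⟨hxy, h⟩⟩
  · exact ⟨hne, Or.inr ⟨Ne.symm hxy, h⟩⟩

lemma bool_res {x a : Bool} (h : ¬ x = a) : x = !a := by
  cases x <;> cases a <;> simp_all

lemma bool_res' {x a : Bool} (h : ¬ x = !a) : x = a := by
  cases x <;> cases a <;> simp_all



/-- length-2 path through one fresh common neighbor -/
lemma pl2 {c : ℕ → ℕ → Bool} {col : Bool} {u v : ℕ} (huv : u ≠ v) (hpar : u % 2 = v % 2)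
    (H : ∀ s : Finset ℕ, ∃ w, w ∉ s ∧ w % 2 ≠ u % 2 ∧
      (c u w = col ∨ c w u = col) ∧ (c w v = col ∨ c v w = col)) :
    PairLinked (bipColorGraph c col) u v := by
  apply master
  intro s
  obtain ⟨w, hws, hwp, e1, e2⟩ := H (s ∪ {u, v})
  simp only [Finset.mem_union, Finset.mem_insert, Finset.mem_singleton, not_or] at hws
  have a1 : (bipColorGraph c col).Adj u w := adjc (fun h => hwp h.symm) e1
  have a2 : (bipColorGraph c col).Adj w v := adjc (by omega) e2
  refine ⟨Walk.cons a1 (Walk.cons a2 Walk.nil), ?_, ?_⟩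
  · rw [Walk.isPath_def]
    simp [Walk.support_cons, Walk.support_nil, List.nodup_cons]
    exact ⟨⟨Ne.symm hws.2.1, huv⟩, hws.2.2⟩
  · intro x hx hxu hxv
    simp [Walk.support_cons, Walk.support_nil] at hx
    rcases hx with h | h | h
    · exact absurd h hxu
    · subst h; exact hws.1
    · exact absurd h hxv

/-- length-3 path u-w-z-v, u and v of opposite parity -/
lemma pl3 {c : ℕ → ℕ → Bool} {col : Bool} {u v : ℕ} (hpar : u % 2 ≠ v % 2)
    (H : ∀ s : Finset ℕ, ∃ w z, w ∉ s ∧ z ∉ s ∧ w % 2 = v % 2 ∧ z % 2 = u % 2 ∧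
      (c u w = col ∨ c w u = col) ∧ (c w z = col ∨ c z w = col) ∧
      (c z v = col ∨ c v z = col)) :
    PairLinked (bipColorGraph c col) u v := by
  apply master
  intro s
  obtain ⟨w, z, hws, hzs, hwp, hzp, e1, e2, e3⟩ := H (s ∪ {u, v})
  simp only [Finset.mem_union, Finset.mem_insert, Finset.mem_singleton, not_or] at hws hzs
  have a1 : (bipColorGraph c col).Adj u w := adjc (by omega) e1
  have a2 : (bipColorGraph c col).Adj w z := adjc (by omega) e2
  have a3 : (bipColorGraph c col).Adj z v := adjc (by omega) e3
  refine ⟨Walk.cons a1 (Walk.cons a2 (Walk.cons a3 Walk.nil)), ?_, ?_⟩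
  · rw [Walk.isPath_def]
    simp only [Walk.support_cons, Walk.support_nil, List.nodup_cons, List.mem_cons,
      List.mem_singleton, List.not_mem_nil, not_or, List.nodup_nil, and_true]
    exact ⟨⟨by omega, fun h => hzs.2.1 h.symm, by omega, not_false⟩,
      ⟨by omega, hws.2.2, not_false⟩, ⟨by omega, not_false⟩, not_false⟩
  · intro x hx hxu hxv
    simp only [Walk.support_cons, Walk.support_nil, List.mem_cons, List.mem_singleton,
      List.not_mem_nil, or_false] at hx
    rcases hx with h | h | h | h
    · exact absurd h hxu
    · subst h; exact hws.1
    · subst h; exact hzs.1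
    · exact absurd h hxv


lemma ne_of_mod_ne {x y : ℕ} (h : x % 2 ≠ y % 2) : x ≠ y := fun he => h (he ▸ rfl)

lemma pl4 {c : ℕ → ℕ → Bool} {col : Bool} {u v : ℕ} (huv : u ≠ v) (hpar : u % 2 = v % 2)
    (H : ∀ s : Finset ℕ, ∃ z w z', z ∉ s ∧ w ∉ s ∧ z' ∉ s ∧
      z % 2 ≠ u % 2 ∧ w % 2 = u % 2 ∧ z' % 2 ≠ u % 2 ∧ z ≠ z' ∧
      (c u z = col ∨ c z u = col) ∧ (c z w = col ∨ c w z = col) ∧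
      (c w z' = col ∨ c z' w = col) ∧ (c z' v = col ∨ c v z' = col)) :
    PairLinked (bipColorGraph c col) u v := by
  apply master
  intro s
  obtain ⟨z, w, z', hzs, hws, hz's, hzp, hwp, hz'p, hzz', e1, e2, e3, e4⟩ := H (s ∪ {u, v})
  simp only [Finset.mem_union, Finset.mem_insert, Finset.mem_singleton, not_or] at hws hzs hz's
  have a1 : (bipColorGraph c col).Adj u z := adjc (Ne.symm hzp) e1
  have a2 : (bipColorGraph c col).Adj z w := adjc (fun hh => hzp (hh.trans hwp)) e2
  have a3 : (bipColorGraph c col).Adj w z' := adjc (fun hh => hz'p (hh.symm.trans hwp)) e3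
  have a4 : (bipColorGraph c col).Adj z' v := adjc (fun hh => hz'p (hh.trans hpar.symm)) e4
  have d1 : ¬ u = z := (ne_of_mod_ne hzp).symm
  have d2 : ¬ u = w := fun h => hws.2.1 h.symm
  have d3 : ¬ u = z' := (ne_of_mod_ne hz'p).symm
  have d4 : ¬ u = v := huv
  have d5 : ¬ z = w := ne_of_mod_ne (fun hh => hzp (hh.trans hwp))
  have d6 : ¬ z = z' := hzz'
  have d7 : ¬ z = v := ne_of_mod_ne (fun hh => hzp (hh.trans hpar.symm))
  have d8 : ¬ w = z' := ne_of_mod_ne (fun hh => hz'p (hh.symm.trans hwp))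
  have d9 : ¬ w = v := hws.2.2
  have d10 : ¬ z' = v := ne_of_mod_ne (fun hh => hz'p (hh.trans hpar.symm))
  refine ⟨Walk.cons a1 (Walk.cons a2 (Walk.cons a3 (Walk.cons a4 Walk.nil))), ?_, ?_⟩
  · rw [Walk.isPath_def]
    simp only [Walk.support_cons, Walk.support_nil, List.nodup_cons, List.mem_cons,
      List.mem_singleton, List.not_mem_nil, not_or, List.nodup_nil, and_true]
    exact ⟨⟨d1, d2, d3, d4, not_false⟩, ⟨d5, d6, d7, not_false⟩, ⟨d8, d9, not_false⟩,
      ⟨d10, not_false⟩, not_false⟩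
  · intro x hx hxu hxv
    simp only [Walk.support_cons, Walk.support_nil, List.mem_cons, List.mem_singleton,
      List.not_mem_nil, or_false] at hx
    rcases hx with h | h | h | h | h
    · exact absurd h hxu
    · subst h; exact hzs.1
    · subst h; exact hws.1
    · subst h; exact hz's.1
    · exact absurd h hxv

lemma pl5 {c : ℕ → ℕ → Bool} {col : Bool} {u v : ℕ} (hpar : u % 2 ≠ v % 2)
    (H : ∀ s : Finset ℕ, ∃ w z w' z', w ∉ s ∧ z ∉ s ∧ w' ∉ s ∧ z' ∉ s ∧
      w % 2 = v % 2 ∧ z % 2 = u % 2 ∧ w' % 2 = v % 2 ∧ z' % 2 = u % 2 ∧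
      w ≠ w' ∧ z ≠ z' ∧
      (c u w = col ∨ c w u = col) ∧ (c w z = col ∨ c z w = col) ∧
      (c z w' = col ∨ c w' z = col) ∧ (c w' z' = col ∨ c z' w' = col) ∧
      (c z' v = col ∨ c v z' = col)) :
    PairLinked (bipColorGraph c col) u v := by
  apply master
  intro s
  obtain ⟨w, z, w', z', hws, hzs, hw's, hz's, p1, p2, p3, p4, dww, dzz, e1, e2, e3, e4, e5⟩ :=
    H (s ∪ {u, v})
  simp only [Finset.mem_union, Finset.mem_insert, Finset.mem_singleton, not_or] at hws hzs hw's hz's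
  have m1 : u % 2 ≠ w % 2 := fun hh => hpar (hh.trans p1)
  have m2 : w % 2 ≠ z % 2 := fun hh => hpar (((hh.trans p2).symm).trans p1)
  have m3 : z % 2 ≠ w' % 2 := fun hh => hpar ((p2.symm.trans hh).trans p3)
  have m4 : w' % 2 ≠ z' % 2 := fun hh => hpar ((p4.symm.trans hh.symm).trans p3)
  have m5 : z' % 2 ≠ v % 2 := fun hh => hpar (p4.symm.trans hh)
  have a1 : (bipColorGraph c col).Adj u w := adjc m1 e1
  have a2 : (bipColorGraph c col).Adj w z := adjc m2 e2
  have a3 : (bipColorGraph c col).Adj z w' := adjc m3 e3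
  have a4 : (bipColorGraph c col).Adj w' z' := adjc m4 e4
  have a5 : (bipColorGraph c col).Adj z' v := adjc m5 e5
  have d1 : ¬ u = w := ne_of_mod_ne m1
  have d2 : ¬ u = z := fun h => hzs.2.1 h.symm
  have d3 : ¬ u = w' := ne_of_mod_ne (fun hh => hpar (hh.trans p3))
  have d4 : ¬ u = z' := fun h => hz's.2.1 h.symm
  have d5 : ¬ u = v := ne_of_mod_ne hpar
  have d6 : ¬ w = z := ne_of_mod_ne m2
  have d7 : ¬ w = w' := dww
  have d8 : ¬ w = z' := ne_of_mod_ne (fun hh => hpar (((hh.trans p4).symm).trans p1))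
  have d9 : ¬ w = v := hws.2.2
  have d10 : ¬ z = w' := ne_of_mod_ne m3
  have d11 : ¬ z = z' := dzz
  have d12 : ¬ z = v := ne_of_mod_ne (fun hh => hpar (p2.symm.trans hh))
  have d13 : ¬ w' = z' := ne_of_mod_ne m4
  have d14 : ¬ w' = v := hw's.2.2
  have d15 : ¬ z' = v := ne_of_mod_ne m5
  refine ⟨Walk.cons a1 (Walk.cons a2 (Walk.cons a3 (Walk.cons a4 (Walk.cons a5 Walk.nil)))),
    ?_, ?_⟩
  · rw [Walk.isPath_def]
    simp only [Walk.support_cons, Walk.support_nil, List.nodup_cons, List.mem_cons,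
      List.mem_singleton, List.not_mem_nil, not_or, List.nodup_nil, and_true]
    exact ⟨⟨d1, d2, d3, d4, d5, not_false⟩, ⟨d6, d7, d8, d9, not_false⟩,
      ⟨d10, d11, d12, not_false⟩, ⟨d13, d14, not_false⟩, ⟨d15, not_false⟩, not_false⟩
  · intro x hx hxu hxv
    simp only [Walk.support_cons, Walk.support_nil, List.mem_cons, List.mem_singleton,
      List.not_mem_nil, or_false] at hx
    rcases hx with h | h | h | h | h | h
    · exact absurd h hxu
    · subst h; exact hws.1
    · subst h; exact hzs.1
    · subst h; exact hw's.1
    · subst h; exact hz's.1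
    · exact absurd h hxv

lemma pl6 {c : ℕ → ℕ → Bool} {col : Bool} {u v : ℕ} (huv : u ≠ v) (hpar : u % 2 = v % 2)
    (H : ∀ s : Finset ℕ, ∃ w z w' z' w'', w ∉ s ∧ z ∉ s ∧ w' ∉ s ∧ z' ∉ s ∧ w'' ∉ s ∧
      w % 2 ≠ u % 2 ∧ z % 2 = u % 2 ∧ w' % 2 ≠ u % 2 ∧ z' % 2 = u % 2 ∧ w'' % 2 ≠ u % 2 ∧
      w ≠ w' ∧ w ≠ w'' ∧ w' ≠ w'' ∧ z ≠ z' ∧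
      (c u w = col ∨ c w u = col) ∧ (c w z = col ∨ c z w = col) ∧
      (c z w' = col ∨ c w' z = col) ∧ (c w' z' = col ∨ c z' w' = col) ∧
      (c z' w'' = col ∨ c w'' z' = col) ∧ (c w'' v = col ∨ c v w'' = col)) :
    PairLinked (bipColorGraph c col) u v := by
  apply master
  intro s
  obtain ⟨w, z, w', z', w'', hws, hzs, hw's, hz's, hw''s, p1, p2, p3, p4, p5,
    q1, q2, q3, q4, e1, e2, e3, e4, e5, e6⟩ := H (s ∪ {u, v})
  simp only [Finset.mem_union, Finset.mem_insert, Finset.mem_singleton, not_or] at hws hzs hw's hz's hw''s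
  have m1 : u % 2 ≠ w % 2 := fun hh => p1 hh.symm
  have m2 : w % 2 ≠ z % 2 := fun hh => p1 (hh.trans p2)
  have m3 : z % 2 ≠ w' % 2 := fun hh => p3 (hh.symm.trans p2)
  have m4 : w' % 2 ≠ z' % 2 := fun hh => p3 (hh.trans p4)
  have m5 : z' % 2 ≠ w'' % 2 := fun hh => p5 (hh.symm.trans p4)
  have m6 : w'' % 2 ≠ v % 2 := fun hh => p5 (hh.trans hpar.symm)
  have a1 : (bipColorGraph c col).Adj u w := adjc m1 e1
  have a2 : (bipColorGraph c col).Adj w z := adjc m2 e2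
  have a3 : (bipColorGraph c col).Adj z w' := adjc m3 e3
  have a4 : (bipColorGraph c col).Adj w' z' := adjc m4 e4
  have a5 : (bipColorGraph c col).Adj z' w'' := adjc m5 e5
  have a6 : (bipColorGraph c col).Adj w'' v := adjc m6 e6
  have d1 : ¬ u = w := ne_of_mod_ne m1
  have d2 : ¬ u = z := fun h => hzs.2.1 h.symm
  have d3 : ¬ u = w' := ne_of_mod_ne (fun hh => p3 hh.symm)
  have d4 : ¬ u = z' := fun h => hz's.2.1 h.symm
  have d5 : ¬ u = w'' := ne_of_mod_ne (fun hh => p5 hh.symm)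
  have d6 : ¬ u = v := huv
  have d7 : ¬ w = z := ne_of_mod_ne m2
  have d8 : ¬ w = w' := q1
  have d9 : ¬ w = z' := ne_of_mod_ne (fun hh => p1 (hh.trans p4))
  have d10 : ¬ w = w'' := q2
  have d11 : ¬ w = v := ne_of_mod_ne (fun hh => p1 (hh.trans hpar.symm))
  have d12 : ¬ z = w' := ne_of_mod_ne m3
  have d13 : ¬ z = z' := q4
  have d14 : ¬ z = w'' := ne_of_mod_ne (fun hh => p5 (hh.symm.trans p2))
  have d15 : ¬ z = v := hzs.2.2
  have d16 : ¬ w' = z' := ne_of_mod_ne m4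
  have d17 : ¬ w' = w'' := q3
  have d18 : ¬ w' = v := ne_of_mod_ne (fun hh => p3 (hh.trans hpar.symm))
  have d19 : ¬ z' = w'' := ne_of_mod_ne m5
  have d20 : ¬ z' = v := hz's.2.2
  have d21 : ¬ w'' = v := ne_of_mod_ne m6
  refine ⟨Walk.cons a1 (Walk.cons a2 (Walk.cons a3 (Walk.cons a4 (Walk.cons a5
    (Walk.cons a6 Walk.nil))))), ?_, ?_⟩
  · rw [Walk.isPath_def]
    simp only [Walk.support_cons, Walk.support_nil, List.nodup_cons, List.mem_cons,
      List.mem_singleton, List.not_mem_nil, not_or, List.nodup_nil, and_true]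
    exact ⟨⟨d1, d2, d3, d4, d5, d6, not_false⟩, ⟨d7, d8, d9, d10, d11, not_false⟩,
      ⟨d12, d13, d14, d15, not_false⟩, ⟨d16, d17, d18, not_false⟩, ⟨d19, d20, not_false⟩,
      ⟨d21, not_false⟩, not_false⟩
  · intro x hx hxu hxv
    simp only [Walk.support_cons, Walk.support_nil, List.mem_cons, List.mem_singleton,
      List.not_mem_nil, or_false] at hx
    rcases hx with h | h | h | h | h | h | h
    · exact absurd h hxu
    · subst h; exact hws.1
    · subst h; exact hzs.1
    · subst h; exact hw's.1
    · subst h; exact hz's.1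
    · subst h; exact hw''s.1
    · exact absurd h hxv

lemma mne10 {x y : ℕ} (hx : x % 2 = 1) (hy : y % 2 = 0) : x % 2 ≠ y % 2 := by
  rw [hx, hy]; exact one_ne_zero

lemma mne01 {x y : ℕ} (hx : x % 2 = 0) (hy : y % 2 = 1) : x % 2 ≠ y % 2 := by
  rw [hx, hy]; exact zero_ne_one

lemma meq {x y : ℕ} {i j : ℕ} (hx : x % 2 = i) (hy : y % 2 = j) (hij : i = j) :
    x % 2 = y % 2 := by rw [hx, hy, hij]

lemma infLinked_of {G : SimpleGraph ℕ} {S : Set ℕ}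
    (hee : ∀ u ∈ S, ∀ v ∈ S, u ≠ v → u % 2 = 0 → v % 2 = 0 → PairLinked G u v)
    (hoo : ∀ u ∈ S, ∀ v ∈ S, u ≠ v → u % 2 = 1 → v % 2 = 1 → PairLinked G u v)
    (heo : ∀ u ∈ S, ∀ v ∈ S, u % 2 = 0 → v % 2 = 1 → PairLinked G u v) :
    InfLinked G S := by
  intro u hu v hv huv
  rcases Nat.mod_two_eq_zero_or_one u with h1 | h1 <;>
    rcases Nat.mod_two_eq_zero_or_one v with h2 | h2
  · exact hee u hu v hv huv h1 h2
  · exact heo u hu v hv h1 h2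
  · exact (heo v hv u hu h2 h1).symm
  · exact hoo u hu v hv huv h1 h2

lemma exists_ultra (S : Set ℕ) (hS : S.Infinite) :
    ∃ U : Ultrafilter ℕ, S ∈ U ∧ ∀ {T : Set ℕ}, T ∈ U → T.Infinite := by
  have hne : (Filter.cofinite ⊓ Filter.principal S).NeBot := hS.cofinite_inf_principal_neBot
  obtain ⟨U, hU⟩ := Ultrafilter.exists_le (Filter.cofinite ⊓ Filter.principal S)
  have hcof : (↑U : Filter ℕ) ≤ Filter.cofinite := hU.trans inf_le_left
  refine ⟨U, hU (Filter.mem_inf_of_right (Filter.mem_principal_self S)), ?_⟩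
  intro T hT
  by_contra hfin
  rw [Set.not_infinite] at hfin
  have h1 : Tᶜ ∈ U := hcof (Filter.mem_cofinite.mpr (by simpa using hfin))
  have h2 := Filter.inter_mem hT h1
  rw [Set.inter_compl_self] at h2
  exact Filter.empty_notMem (↑U : Filter ℕ) h2

lemma exists_col {U : Ultrafilter ℕ} {P : ℕ → Prop} (hP : {w | P w} ∈ U) (d : ℕ → Bool) :
    ∃ b : Bool, {w | P w ∧ d w = b} ∈ U := by
  have hun : {w | P w ∧ d w = true} ∪ {w | P w ∧ d w = false} = {w | P w} := by
    ext w
    simp only [Set.mem_union, Set.mem_setOf_eq]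
    constructor
    · rintro (⟨h, _⟩ | ⟨h, _⟩) <;> exact h
    · intro h
      cases hd : d w
      · exact Or.inr ⟨h, rfl⟩
      · exact Or.inl ⟨h, rfl⟩
  rcases Ultrafilter.union_mem_iff.mp (by rw [hun]; exact hP) with h | h
  · exact ⟨true, h⟩
  · exact ⟨false, h⟩

lemma odds_infinite : ({n : ℕ | n % 2 = 1}).Infinite := by
  apply Set.infinite_of_injective_forall_mem (f := fun k : ℕ => 2 * k + 1)
  · intro x y h
    simp only at h
    omega
  · intro k
    simp only [Set.mem_setOf_eq]
    omega

lemma evens_infinite : ({n : ℕ | n % 2 = 0}).Infinite := by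
  apply Set.infinite_of_injective_forall_mem (f := fun k : ℕ => 2 * k)
  · intro x y h
    simp only at h
    omega
  · intro k
    simp only [Set.mem_setOf_eq]
    omega

/-- Case II (non-crossing): the attachable vertices form a set infinitely linked in color `a`. -/
lemma XlinkII (c : ℕ → ℕ → Bool) (U W : Ultrafilter ℕ) (f g : ℕ → Bool) (a : Bool)
    (hUinf : ∀ {T : Set ℕ}, T ∈ U → T.Infinite)
    (hWinf : ∀ {T : Set ℕ}, T ∈ W → T.Infinite)
    (hfU : ∀ u, {w | w % 2 = 1 ∧ c u w = f u} ∈ U)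
    (hgW : ∀ v, {z | z % 2 = 0 ∧ c z v = g v} ∈ W)
    (haW : {u | u % 2 = 0 ∧ f u = a} ∈ W) :
    InfLinked (bipColorGraph c a)
      ({n | n % 2 = 0 ∧ {w | (w % 2 = 1 ∧ g w = a) ∧ c n w = a}.Infinite} ∪
       {n | n % 2 = 1 ∧ {z | (z % 2 = 0 ∧ f z = a) ∧ c z n = a}.Infinite}) := by
  have getE : ∀ {n}, n ∈ ({n | n % 2 = 0 ∧ {w | (w % 2 = 1 ∧ g w = a) ∧ c n w = a}.Infinite} ∪
       {n | n % 2 = 1 ∧ {z | (z % 2 = 0 ∧ f z = a) ∧ c z n = a}.Infinite} : Set ℕ) →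
      n % 2 = 0 → {w | (w % 2 = 1 ∧ g w = a) ∧ c n w = a}.Infinite := by
    rintro n (⟨_, h⟩ | ⟨h1, _⟩) h0
    · exact h
    · exact absurd (h0.symm.trans h1) zero_ne_one
  have getO : ∀ {n}, n ∈ ({n | n % 2 = 0 ∧ {w | (w % 2 = 1 ∧ g w = a) ∧ c n w = a}.Infinite} ∪
       {n | n % 2 = 1 ∧ {z | (z % 2 = 0 ∧ f z = a) ∧ c z n = a}.Infinite} : Set ℕ) →
      n % 2 = 1 → {z | (z % 2 = 0 ∧ f z = a) ∧ c z n = a}.Infinite := by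
    rintro n (⟨h0, _⟩ | ⟨_, h⟩) h1
    · exact absurd (h0.symm.trans h1) zero_ne_one
    · exact h
  -- the W-large fiber of a core odd vertex
  have fiber : ∀ {w1 : ℕ}, g w1 = a →
      ({z | z % 2 = 0 ∧ c z w1 = a} ∩ {z | z % 2 = 0 ∧ f z = a}).Infinite := by
    intro w1 hgw1
    exact hWinf (Filter.inter_mem (by rw [← hgw1]; exact hgW w1) haW)
  -- the U-large common color-a neighborhood of two core even vertices
  have bridge : ∀ {z1 z2 : ℕ}, f z1 = a → f z2 = a →
      ({w | w % 2 = 1 ∧ c z1 w = a} ∩ {w | w % 2 = 1 ∧ c z2 w = a}).Infinite := by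
    intro z1 z2 h1 h2
    exact hUinf (Filter.inter_mem (by rw [← h1]; exact hfU z1) (by rw [← h2]; exact hfU z2))
  refine infLinked_of ?_ ?_ ?_
  · -- even-even
    intro u hu v hv huv hu0 hv0
    refine pl6 huv (meq hu0 hv0 rfl) ?_
    intro s
    obtain ⟨w1, ⟨⟨hw11, hgw1⟩, hcuw1⟩, hw1s⟩ := (getE hu hu0).exists_notMem_finset s
    obtain ⟨z1, ⟨⟨hz10, hcz1w1⟩, ⟨_, hfz1⟩⟩, hz1s⟩ := (fiber hgw1).exists_notMem_finset s
    obtain ⟨w2, ⟨⟨hw21, hgw2⟩, hcvw2⟩, hw2s⟩ := (getE hv hv0).exists_notMem_finset (s ∪ {w1})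
    obtain ⟨z2, ⟨⟨hz20, hcz2w2⟩, ⟨_, hfz2⟩⟩, hz2s⟩ := (fiber hgw2).exists_notMem_finset (s ∪ {z1})
    obtain ⟨w3, ⟨⟨hw31, hcz1w3⟩, ⟨_, hcz2w3⟩⟩, hw3s⟩ :=
      (bridge hfz1 hfz2).exists_notMem_finset (s ∪ {w1, w2})
    simp only [Finset.mem_union, Finset.mem_insert, Finset.mem_singleton, not_or] at hw2s hz2s hw3s
    exact ⟨w1, z1, w3, z2, w2, hw1s, hz1s, hw3s.1, hz2s.1, hw2s.1,
      mne10 hw11 hu0, meq hz10 hu0 rfl, mne10 hw31 hu0, meq hz20 hu0 rfl, mne10 hw21 hu0,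
      fun h => hw3s.2.1 h.symm, fun h => hw2s.2 h.symm, hw3s.2.2,
      fun h => hz2s.2 h.symm,
      Or.inl hcuw1, Or.inr hcz1w1, Or.inl hcz1w3, Or.inr hcz2w3, Or.inl hcz2w2, Or.inr hcvw2⟩
  · -- odd-odd
    intro u hu v hv huv hu1 hv1
    refine pl4 huv (meq hu1 hv1 rfl) ?_
    intro s
    obtain ⟨z1, ⟨⟨hz10, hfz1⟩, hcz1u⟩, hz1s⟩ := (getO hu hu1).exists_notMem_finset s
    obtain ⟨z2, ⟨⟨hz20, hfz2⟩, hcz2v⟩, hz2s⟩ := (getO hv hv1).exists_notMem_finset (s ∪ {z1})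
    obtain ⟨w3, ⟨⟨hw31, hcz1w3⟩, ⟨_, hcz2w3⟩⟩, hw3s⟩ :=
      (bridge hfz1 hfz2).exists_notMem_finset s
    simp only [Finset.mem_union, Finset.mem_singleton, not_or] at hz2s
    exact ⟨z1, w3, z2, hz1s, hw3s, hz2s.1,
      mne01 hz10 hu1, meq hw31 hu1 rfl, mne01 hz20 hu1, fun h => hz2s.2 h.symm,
      Or.inr hcz1u, Or.inl hcz1w3, Or.inr hcz2w3, Or.inl hcz2v⟩
  · -- even-odd
    intro u hu v hv hu0 hv1
    refine pl5 (mne01 hu0 hv1) ?_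
    intro s
    obtain ⟨w1, ⟨⟨hw11, hgw1⟩, hcuw1⟩, hw1s⟩ := (getE hu hu0).exists_notMem_finset s
    obtain ⟨z1, ⟨⟨hz10, hcz1w1⟩, ⟨_, hfz1⟩⟩, hz1s⟩ := (fiber hgw1).exists_notMem_finset s
    obtain ⟨z2, ⟨⟨hz20, hfz2⟩, hcz2v⟩, hz2s⟩ := (getO hv hv1).exists_notMem_finset (s ∪ {z1})
    obtain ⟨w3, ⟨⟨hw31, hcz1w3⟩, ⟨_, hcz2w3⟩⟩, hw3s⟩ :=
      (bridge hfz1 hfz2).exists_notMem_finset (s ∪ {w1})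
    simp only [Finset.mem_union, Finset.mem_singleton, not_or] at hz2s hw3s
    exact ⟨w1, z1, w3, z2, hw1s, hz1s, hw3s.1, hz2s.1,
      meq hw11 hv1 rfl, meq hz10 hu0 rfl, meq hw31 hv1 rfl, meq hz20 hu0 rfl,
      fun h => hw3s.2 h.symm, fun h => hz2s.2 h.symm,
      Or.inl hcuw1, Or.inr hcz1w1, Or.inl hcz1w3, Or.inr hcz2w3, Or.inl hcz2v⟩

/-- An all-odd set of non-attachable vertices is linked in color `!a` via the core evens. -/
lemma YlinkO (c : ℕ → ℕ → Bool) (W : Ultrafilter ℕ) (f : ℕ → Bool) (a : Bool)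
    (hWinf : ∀ {T : Set ℕ}, T ∈ W → T.Infinite)
    (haW : {u | u % 2 = 0 ∧ f u = a} ∈ W) (S : Set ℕ)
    (hS : ∀ n ∈ S, n % 2 = 1 ∧ ¬ {z | (z % 2 = 0 ∧ f z = a) ∧ c z n = a}.Infinite) :
    InfLinked (bipColorGraph c (!a)) S := by
  refine infLinked_of ?_ ?_ ?_
  · intro u hu v hv huv hu0 hv0
    exact absurd (hu0.symm.trans (hS u hu).1) zero_ne_one
  · intro u hu v hv huv hu1 hv1
    refine pl2 huv (meq hu1 hv1 rfl) ?_
    intro s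
    have hT : (({z | z % 2 = 0 ∧ f z = a} \
        ({z | (z % 2 = 0 ∧ f z = a) ∧ c z u = a} ∪
         {z | (z % 2 = 0 ∧ f z = a) ∧ c z v = a})) : Set ℕ).Infinite :=
      (hWinf haW).diff ((Set.not_infinite.mp (hS u hu).2).union (Set.not_infinite.mp (hS v hv).2))
    obtain ⟨z, ⟨⟨hz0, hfz⟩, hznb⟩, hzs⟩ := hT.exists_notMem_finset s
    simp only [Set.mem_union, Set.mem_setOf_eq, not_or] at hznb
    refine ⟨z, hzs, mne01 hz0 hu1, Or.inr ?_, Or.inl ?_⟩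
    · exact bool_res (fun h => hznb.1 ⟨⟨hz0, hfz⟩, h⟩)
    · exact bool_res (fun h => hznb.2 ⟨⟨hz0, hfz⟩, h⟩)
  · intro u hu v hv hu0 hv1
    exact absurd (hu0.symm.trans (hS u hu).1) zero_ne_one

/-- An all-even set of non-attachable vertices is linked in color `!a` via the core odds. -/
lemma YlinkE (c : ℕ → ℕ → Bool) (U : Ultrafilter ℕ) (g : ℕ → Bool) (a : Bool)
    (hUinf : ∀ {T : Set ℕ}, T ∈ U → T.Infinite)
    (hbU : {v | v % 2 = 1 ∧ g v = a} ∈ U) (S : Set ℕ)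
    (hS : ∀ n ∈ S, n % 2 = 0 ∧ ¬ {w | (w % 2 = 1 ∧ g w = a) ∧ c n w = a}.Infinite) :
    InfLinked (bipColorGraph c (!a)) S := by
  refine infLinked_of ?_ ?_ ?_
  · intro u hu v hv huv hu0 hv0
    refine pl2 huv (meq hu0 hv0 rfl) ?_
    intro s
    have hT : (({w | w % 2 = 1 ∧ g w = a} \
        ({w | (w % 2 = 1 ∧ g w = a) ∧ c u w = a} ∪
         {w | (w % 2 = 1 ∧ g w = a) ∧ c v w = a})) : Set ℕ).Infinite :=
      (hUinf hbU).diff ((Set.not_infinite.mp (hS u hu).2).union (Set.not_infinite.mp (hS v hv).2))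
    obtain ⟨w, ⟨⟨hw1, hgw⟩, hwnb⟩, hws⟩ := hT.exists_notMem_finset s
    simp only [Set.mem_union, Set.mem_setOf_eq, not_or] at hwnb
    refine ⟨w, hws, mne10 hw1 hu0, Or.inl ?_, Or.inr ?_⟩
    · exact bool_res (fun h => hwnb.1 ⟨⟨hw1, hgw⟩, h⟩)
    · exact bool_res (fun h => hwnb.2 ⟨⟨hw1, hgw⟩, h⟩)
  · intro u hu v hv huv hu1 hv1
    exact absurd ((hS u hu).1.symm.trans hu1) zero_ne_one
  · intro u hu v hv hu0 hv1
    exact absurd ((hS v hv).1.symm.trans hv1) zero_ne_one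

/-- Matching subcase: the non-attachable vertices are linked in color `!a`. -/
lemma YlinkM (c : ℕ → ℕ → Bool) (U W : Ultrafilter ℕ) (f g : ℕ → Bool) (a : Bool)
    (hUinf : ∀ {T : Set ℕ}, T ∈ U → T.Infinite)
    (hWinf : ∀ {T : Set ℕ}, T ∈ W → T.Infinite)
    (haW : {u | u % 2 = 0 ∧ f u = a} ∈ W)
    (hbU : {v | v % 2 = 1 ∧ g v = a} ∈ U)
    (hm : ∀ s : Finset ℕ, ∃ z w : ℕ,
      (z % 2 = 0 ∧ ¬ {w' | (w' % 2 = 1 ∧ g w' = a) ∧ c z w' = a}.Infinite) ∧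
      (w % 2 = 1 ∧ ¬ {z' | (z' % 2 = 0 ∧ f z' = a) ∧ c z' w = a}.Infinite) ∧
      c z w = !a ∧ z ∉ s ∧ w ∉ s) :
    InfLinked (bipColorGraph c (!a))
      ({n | n % 2 = 0 ∧ ¬ {w | (w % 2 = 1 ∧ g w = a) ∧ c n w = a}.Infinite} ∪
       {n | n % 2 = 1 ∧ ¬ {z | (z % 2 = 0 ∧ f z = a) ∧ c z n = a}.Infinite}) := by
  have getE : ∀ {n}, n ∈ ({n | n % 2 = 0 ∧ ¬ {w | (w % 2 = 1 ∧ g w = a) ∧ c n w = a}.Infinite} ∪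
       {n | n % 2 = 1 ∧ ¬ {z | (z % 2 = 0 ∧ f z = a) ∧ c z n = a}.Infinite} : Set ℕ) →
      n % 2 = 0 → ¬ {w | (w % 2 = 1 ∧ g w = a) ∧ c n w = a}.Infinite := by
    rintro n (⟨_, h⟩ | ⟨h1, _⟩) h0
    · exact h
    · exact absurd (h0.symm.trans h1) zero_ne_one
  have getO : ∀ {n}, n ∈ ({n | n % 2 = 0 ∧ ¬ {w | (w % 2 = 1 ∧ g w = a) ∧ c n w = a}.Infinite} ∪
       {n | n % 2 = 1 ∧ ¬ {z | (z % 2 = 0 ∧ f z = a) ∧ c z n = a}.Infinite} : Set ℕ) →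
      n % 2 = 1 → ¬ {z | (z % 2 = 0 ∧ f z = a) ∧ c z n = a}.Infinite := by
    rintro n (⟨h0, _⟩ | ⟨_, h⟩) h1
    · exact absurd (h0.symm.trans h1) zero_ne_one
    · exact h
  -- fresh odd core vertex seeing two given non-attachable evens in color !a
  have pickO : ∀ (n m : ℕ), ¬ {w | (w % 2 = 1 ∧ g w = a) ∧ c n w = a}.Infinite →
      ¬ {w | (w % 2 = 1 ∧ g w = a) ∧ c m w = a}.Infinite → ∀ s : Finset ℕ,
      ∃ w, w ∉ s ∧ w % 2 = 1 ∧ c n w = !a ∧ c m w = !a := by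
    intro n m hn hm' s
    have hT : (({w | w % 2 = 1 ∧ g w = a} \
        ({w | (w % 2 = 1 ∧ g w = a) ∧ c n w = a} ∪
         {w | (w % 2 = 1 ∧ g w = a) ∧ c m w = a})) : Set ℕ).Infinite :=
      (hUinf hbU).diff ((Set.not_infinite.mp hn).union (Set.not_infinite.mp hm'))
    obtain ⟨w, ⟨⟨hw1, hgw⟩, hwnb⟩, hws⟩ := hT.exists_notMem_finset s
    simp only [Set.mem_union, Set.mem_setOf_eq, not_or] at hwnb
    exact ⟨w, hws, hw1, bool_res (fun h => hwnb.1 ⟨⟨hw1, hgw⟩, h⟩),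
      bool_res (fun h => hwnb.2 ⟨⟨hw1, hgw⟩, h⟩)⟩
  have pickE : ∀ (n m : ℕ), ¬ {z | (z % 2 = 0 ∧ f z = a) ∧ c z n = a}.Infinite →
      ¬ {z | (z % 2 = 0 ∧ f z = a) ∧ c z m = a}.Infinite → ∀ s : Finset ℕ,
      ∃ z, z ∉ s ∧ z % 2 = 0 ∧ c z n = !a ∧ c z m = !a := by
    intro n m hn hm' s
    have hT : (({z | z % 2 = 0 ∧ f z = a} \
        ({z | (z % 2 = 0 ∧ f z = a) ∧ c z n = a} ∪
         {z | (z % 2 = 0 ∧ f z = a) ∧ c z m = a})) : Set ℕ).Infinite :=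
      (hWinf haW).diff ((Set.not_infinite.mp hn).union (Set.not_infinite.mp hm'))
    obtain ⟨z, ⟨⟨hz0, hfz⟩, hznb⟩, hzs⟩ := hT.exists_notMem_finset s
    simp only [Set.mem_union, Set.mem_setOf_eq, not_or] at hznb
    exact ⟨z, hzs, hz0, bool_res (fun h => hznb.1 ⟨⟨hz0, hfz⟩, h⟩),
      bool_res (fun h => hznb.2 ⟨⟨hz0, hfz⟩, h⟩)⟩
  refine infLinked_of ?_ ?_ ?_
  · intro u hu v hv huv hu0 hv0
    refine pl2 huv (meq hu0 hv0 rfl) ?_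
    intro s
    obtain ⟨w, hws, hw1, hcu, hcv⟩ := pickO u v (getE hu hu0) (getE hv hv0) s
    exact ⟨w, hws, mne10 hw1 hu0, Or.inl hcu, Or.inr hcv⟩
  · intro u hu v hv huv hu1 hv1
    refine pl2 huv (meq hu1 hv1 rfl) ?_
    intro s
    obtain ⟨z, hzs, hz0, hcu, hcv⟩ := pickE u v (getO hu hu1) (getO hv hv1) s
    exact ⟨z, hzs, mne01 hz0 hu1, Or.inr hcu, Or.inl hcv⟩
  · intro u hu v hv hu0 hv1
    refine pl5 (mne01 hu0 hv1) ?_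
    intro s
    obtain ⟨zs, ws, ⟨hzs0, hzsbad⟩, ⟨hws1, hwsbad⟩, hczw, hzss, hwss⟩ := hm s
    obtain ⟨w1, hw1s, hw11, hcu1, hcz1⟩ := pickO u zs (getE hu hu0) hzsbad (s ∪ {ws})
    obtain ⟨z2, hz2s, hz20, hcw2, hcv2⟩ := pickE ws v hwsbad (getO hv hv1) (s ∪ {zs})
    simp only [Finset.mem_union, Finset.mem_singleton, not_or] at hw1s hz2s
    exact ⟨w1, zs, ws, z2, hw1s.1, hzss, hwss, hz2s.1,
      meq hw11 hv1 rfl, meq hzs0 hu0 rfl, meq hws1 hv1 rfl, meq hz20 hu0 rfl,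
      hw1s.2, fun h => hz2s.2 h.symm,
      Or.inl hcu1, Or.inr hcz1, Or.inl hczw, Or.inr hcw2, Or.inl hcv2⟩

/-- Cover subcase: outside a finite set, the non-attachables form a complete bipartite
graph in color `a` and hence are linked in color `a`. -/
lemma YlinkC (c : ℕ → ℕ → Bool) (P Q : Set ℕ)
    (hPpar : ∀ n ∈ P, n % 2 = 0) (hQpar : ∀ n ∈ Q, n % 2 = 1)
    (hPinf : P.Infinite) (hQinf : Q.Infinite)
    (hcomp : ∀ z ∈ P, ∀ w ∈ Q, c z w = a) :
    InfLinked (bipColorGraph c a) (P ∪ Q) := by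
  have getP : ∀ {n}, n ∈ P ∪ Q → n % 2 = 0 → n ∈ P := by
    rintro n (h | h) h0
    · exact h
    · exact absurd (h0.symm.trans (hQpar n h)) zero_ne_one
  have getQ : ∀ {n}, n ∈ P ∪ Q → n % 2 = 1 → n ∈ Q := by
    rintro n (h | h) h1
    · exact absurd ((hPpar n h).symm.trans h1) zero_ne_one
    · exact h
  refine infLinked_of ?_ ?_ ?_
  · intro u hu v hv huv hu0 hv0
    refine pl2 huv (meq hu0 hv0 rfl) ?_
    intro s
    obtain ⟨w, hwQ, hws⟩ := hQinf.exists_notMem_finset s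
    exact ⟨w, hws, mne10 (hQpar w hwQ) hu0,
      Or.inl (hcomp u (getP hu hu0) w hwQ), Or.inr (hcomp v (getP hv hv0) w hwQ)⟩
  · intro u hu v hv huv hu1 hv1
    refine pl2 huv (meq hu1 hv1 rfl) ?_
    intro s
    obtain ⟨z, hzP, hzs⟩ := hPinf.exists_notMem_finset s
    exact ⟨z, hzs, mne01 (hPpar z hzP) hu1,
      Or.inr (hcomp z hzP u (getQ hu hu1)), Or.inl (hcomp z hzP v (getQ hv hv1))⟩
  · intro u hu v hv hu0 hv1
    refine pl3 (mne01 hu0 hv1) ?_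
    intro s
    obtain ⟨w, hwQ, hws⟩ := hQinf.exists_notMem_finset s
    obtain ⟨z, hzP, hzs⟩ := hPinf.exists_notMem_finset s
    exact ⟨w, z, hws, hzs, meq (hQpar w hwQ) hv1 rfl, meq (hPpar z hzP) hu0 rfl,
      Or.inl (hcomp u (getP hu hu0) w hwQ), Or.inr (hcomp z hzP w hwQ),
      Or.inl (hcomp z hzP v (getQ hv hv1))⟩

lemma caseII (c : ℕ → ℕ → Bool) (U W : Ultrafilter ℕ) (f g : ℕ → Bool) (a : Bool)
    (hUinf : ∀ {T : Set ℕ}, T ∈ U → T.Infinite)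
    (hWinf : ∀ {T : Set ℕ}, T ∈ W → T.Infinite)
    (hfU : ∀ u, {w | w % 2 = 1 ∧ c u w = f u} ∈ U)
    (hgW : ∀ v, {z | z % 2 = 0 ∧ c z v = g v} ∈ W)
    (haW : {u | u % 2 = 0 ∧ f u = a} ∈ W)
    (hbU : {v | v % 2 = 1 ∧ g v = a} ∈ U) :
    ∃ A X Y : Set ℕ,
      A.Finite ∧
      Disjoint A X ∧ Disjoint A Y ∧ Disjoint X Y ∧
      A ∪ X ∪ Y = Set.univ ∧
      (∃ col : Bool, InfLinked (bipColorGraph c col) X) ∧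
      (∃ col : Bool, InfLinked (bipColorGraph c col) Y) := by
  classical
  have hX := XlinkII c U W f g a hUinf hWinf hfU hgW haW
  by_cases hBE : ({n : ℕ | n % 2 = 0 ∧
      ¬ {w | (w % 2 = 1 ∧ g w = a) ∧ c n w = a}.Infinite}).Finite
  · -- A := BE, Y := BO
    refine ⟨_, _, {n : ℕ | n % 2 = 1 ∧ ¬ {z | (z % 2 = 0 ∧ f z = a) ∧ c z n = a}.Infinite},
      hBE, ?_, ?_, ?_, ?_, ⟨a, hX⟩,
      ⟨!a, YlinkO c W f a hWinf haW _ (fun n hn => hn)⟩⟩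
    · rw [Set.disjoint_left]
      rintro n ⟨h0, hni⟩ (⟨_, hi⟩ | ⟨h1, _⟩)
      · exact hni hi
      · exact absurd (h0.symm.trans h1) zero_ne_one
    · rw [Set.disjoint_left]
      rintro n ⟨h0, _⟩ ⟨h1, _⟩
      exact absurd (h0.symm.trans h1) zero_ne_one
    · rw [Set.disjoint_left]
      rintro n (⟨h0, _⟩ | ⟨_, hi⟩) ⟨h1, hni⟩
      · exact absurd (h0.symm.trans h1) zero_ne_one
      · exact hni hi
    · ext n
      simp only [Set.mem_union, Set.mem_setOf_eq, Set.mem_univ, iff_true]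
      rcases Nat.mod_two_eq_zero_or_one n with h | h
      · by_cases hi : ({w | (w % 2 = 1 ∧ g w = a) ∧ c n w = a}).Infinite
        · exact Or.inl (Or.inr (Or.inl ⟨h, hi⟩))
        · exact Or.inl (Or.inl ⟨h, hi⟩)
      · by_cases hi : ({z | (z % 2 = 0 ∧ f z = a) ∧ c z n = a}).Infinite
        · exact Or.inl (Or.inr (Or.inr ⟨h, hi⟩))
        · exact Or.inr ⟨h, hi⟩
  · by_cases hBO : ({n : ℕ | n % 2 = 1 ∧
        ¬ {z | (z % 2 = 0 ∧ f z = a) ∧ c z n = a}.Infinite}).Finite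
    · -- A := BO, Y := BE
      refine ⟨_, _, {n : ℕ | n % 2 = 0 ∧ ¬ {w | (w % 2 = 1 ∧ g w = a) ∧ c n w = a}.Infinite},
        hBO, ?_, ?_, ?_, ?_, ⟨a, hX⟩,
        ⟨!a, YlinkE c U g a hUinf hbU _ (fun n hn => hn)⟩⟩
      · rw [Set.disjoint_left]
        rintro n ⟨h1, hni⟩ (⟨h0, _⟩ | ⟨_, hi⟩)
        · exact absurd (h0.symm.trans h1) zero_ne_one
        · exact hni hi
      · rw [Set.disjoint_left]
        rintro n ⟨h1, _⟩ ⟨h0, _⟩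
        exact absurd (h0.symm.trans h1) zero_ne_one
      · rw [Set.disjoint_left]
        rintro n (⟨_, hi⟩ | ⟨h1, _⟩) ⟨h0, hni⟩
        · exact hni hi
        · exact absurd (h0.symm.trans h1) zero_ne_one
      · ext n
        simp only [Set.mem_union, Set.mem_setOf_eq, Set.mem_univ, iff_true]
        rcases Nat.mod_two_eq_zero_or_one n with h | h
        · by_cases hi : ({w | (w % 2 = 1 ∧ g w = a) ∧ c n w = a}).Infinite
          · exact Or.inl (Or.inr (Or.inl ⟨h, hi⟩))
          · exact Or.inr ⟨h, hi⟩
        · by_cases hi : ({z | (z % 2 = 0 ∧ f z = a) ∧ c z n = a}).Infinite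
          · exact Or.inl (Or.inr (Or.inr ⟨h, hi⟩))
          · exact Or.inl (Or.inl ⟨h, hi⟩)
    · -- both BE and BO infinite
      by_cases hm : ∀ s : Finset ℕ, ∃ z w : ℕ,
          (z % 2 = 0 ∧ ¬ {w' | (w' % 2 = 1 ∧ g w' = a) ∧ c z w' = a}.Infinite) ∧
          (w % 2 = 1 ∧ ¬ {z' | (z' % 2 = 0 ∧ f z' = a) ∧ c z' w = a}.Infinite) ∧
          c z w = !a ∧ z ∉ s ∧ w ∉ s
      · -- matching subcase : A := ∅
        refine ⟨∅, _,
          {n : ℕ | n % 2 = 0 ∧ ¬ {w | (w % 2 = 1 ∧ g w = a) ∧ c n w = a}.Infinite} ∪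
          {n : ℕ | n % 2 = 1 ∧ ¬ {z | (z % 2 = 0 ∧ f z = a) ∧ c z n = a}.Infinite},
          Set.finite_empty, Set.empty_disjoint _, Set.empty_disjoint _, ?_, ?_, ⟨a, hX⟩,
          ⟨!a, YlinkM c U W f g a hUinf hWinf haW hbU hm⟩⟩
        · rw [Set.disjoint_left]
          rintro n (⟨h0, hi⟩ | ⟨h1, hi⟩) (⟨h0', hni⟩ | ⟨h1', hni⟩)
          · exact hni hi
          · exact absurd (h0.symm.trans h1') zero_ne_one
          · exact absurd (h0'.symm.trans h1) zero_ne_one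
          · exact hni hi
        · ext n
          simp only [Set.mem_union, Set.mem_setOf_eq, Set.mem_univ, iff_true,
            Set.mem_empty_iff_false, false_or]
          rcases Nat.mod_two_eq_zero_or_one n with h | h
          · by_cases hi : ({w | (w % 2 = 1 ∧ g w = a) ∧ c n w = a}).Infinite
            · exact Or.inl (Or.inl ⟨h, hi⟩)
            · exact Or.inr (Or.inl ⟨h, hi⟩)
          · by_cases hi : ({z | (z % 2 = 0 ∧ f z = a) ∧ c z n = a}).Infinite
            · exact Or.inl (Or.inr ⟨h, hi⟩)
            · exact Or.inr (Or.inr ⟨h, hi⟩)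
      · -- cover subcase
        push_neg at hm
        obtain ⟨s₀, hs₀⟩ := hm
        set BE : Set ℕ := {n : ℕ | n % 2 = 0 ∧
          ¬ {w | (w % 2 = 1 ∧ g w = a) ∧ c n w = a}.Infinite} with hBEdef
        set BO : Set ℕ := {n : ℕ | n % 2 = 1 ∧
          ¬ {z | (z % 2 = 0 ∧ f z = a) ∧ c z n = a}.Infinite} with hBOdef
        have hcomp : ∀ z ∈ BE \ ↑s₀, ∀ w ∈ BO \ ↑s₀, c z w = a := by
          intro z hz w hw
          refine bool_res' (fun hne => ?_)
          exact hw.2 (hs₀ z w ⟨hz.1.1, Set.not_infinite.mp hz.1.2⟩ ⟨hw.1.1, Set.not_infinite.mp hw.1.2⟩ hne hz.2)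
        refine ⟨(BE ∪ BO) ∩ ↑s₀, _, (BE \ ↑s₀) ∪ (BO \ ↑s₀),
          Set.Finite.subset s₀.finite_toSet Set.inter_subset_right, ?_, ?_, ?_, ?_, ⟨a, hX⟩,
          ⟨a, YlinkC c (BE \ ↑s₀) (BO \ ↑s₀) (fun n hn => hn.1.1) (fun n hn => hn.1.1)
            (Set.Infinite.diff hBE s₀.finite_toSet)
            (Set.Infinite.diff hBO s₀.finite_toSet) hcomp⟩⟩
        · rw [Set.disjoint_left]
          rintro n ⟨hn, _⟩ hX'
          rcases hn with ⟨h0, hni⟩ | ⟨h1, hni⟩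
          · rcases hX' with ⟨_, hi⟩ | ⟨h1', _⟩
            · exact hni hi
            · exact absurd (h0.symm.trans h1') zero_ne_one
          · rcases hX' with ⟨h0', _⟩ | ⟨_, hi⟩
            · exact absurd (h0'.symm.trans h1) zero_ne_one
            · exact hni hi
        · rw [Set.disjoint_left]
          rintro n ⟨_, hns⟩ (⟨_, hns'⟩ | ⟨_, hns'⟩) <;> exact hns' hns
        · rw [Set.disjoint_left]
          rintro n hX' hY'
          have hn : n ∈ BE ∪ BO := by
            rcases hY' with ⟨h, _⟩ | ⟨h, _⟩
            · exact Or.inl h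
            · exact Or.inr h
          rcases hn with ⟨h0, hni⟩ | ⟨h1, hni⟩
          · rcases hX' with ⟨_, hi⟩ | ⟨h1', _⟩
            · exact hni hi
            · exact absurd (h0.symm.trans h1') zero_ne_one
          · rcases hX' with ⟨h0', _⟩ | ⟨_, hi⟩
            · exact absurd (h0'.symm.trans h1) zero_ne_one
            · exact hni hi
        · ext n
          simp only [Set.mem_union, Set.mem_inter_iff, Set.mem_diff, Set.mem_setOf_eq,
            Set.mem_univ, iff_true]
          rcases Nat.mod_two_eq_zero_or_one n with h | h
          · by_cases hi : ({w | (w % 2 = 1 ∧ g w = a) ∧ c n w = a}).Infinite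
            · exact Or.inl (Or.inr (Or.inl ⟨h, hi⟩))
            · by_cases hns : n ∈ s₀
              · exact Or.inl (Or.inl ⟨Or.inl ⟨h, hi⟩, hns⟩)
              · exact Or.inr (Or.inl ⟨⟨h, hi⟩, hns⟩)
          · by_cases hi : ({z | (z % 2 = 0 ∧ f z = a) ∧ c z n = a}).Infinite
            · exact Or.inl (Or.inr (Or.inr ⟨h, hi⟩))
            · by_cases hns : n ∈ s₀
              · exact Or.inl (Or.inl ⟨Or.inr ⟨h, hi⟩, hns⟩)
              · exact Or.inr (Or.inr ⟨⟨h, hi⟩, hns⟩)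

end Stmt12
section Main
open Stmt12 SimpleGraph

theorem stmt_12 (c : ℕ → ℕ → Bool) (hc : ∀ u v : ℕ, c u v = c v u) :
    ∃ A X Y : Set ℕ,
      A.Finite ∧
      Disjoint A X ∧ Disjoint A Y ∧ Disjoint X Y ∧
      A ∪ X ∪ Y = Set.univ ∧
      (∃ col : Bool, InfLinked (bipColorGraph c col) X) ∧
      (∃ col : Bool, InfLinked (bipColorGraph c col) Y) := by
  classical
  obtain ⟨U, hUodd, hUinf⟩ := exists_ultra {n : ℕ | n % 2 = 1} odds_infinite
  obtain ⟨W, hWev, hWinf⟩ := exists_ultra {n : ℕ | n % 2 = 0} evens_infinite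
  have hfex : ∀ u : ℕ, ∃ b : Bool, {w | w % 2 = 1 ∧ c u w = b} ∈ U :=
    fun u => exists_col hUodd (fun w => c u w)
  choose f hfU using hfex
  have hgex : ∀ v : ℕ, ∃ b : Bool, {z | z % 2 = 0 ∧ c z v = b} ∈ W :=
    fun v => exists_col hWev (fun z => c z v)
  choose g hgW using hgex
  obtain ⟨a, haW⟩ : ∃ a : Bool, {u | u % 2 = 0 ∧ f u = a} ∈ W := exists_col hWev f
  obtain ⟨b, hbU⟩ : ∃ b : Bool, {v | v % 2 = 1 ∧ g v = b} ∈ U := exists_col hUodd g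
  by_cases hab : b = a
  · -- non-crossing case
    rw [hab] at hbU
    exact caseII c U W f g a hUinf hWinf hfU hgW haW hbU
  · -- crossing case : b = !a
    have hba : b = !a := bool_res hab
    rw [hba] at hbU
    refine ⟨∅, {n | n % 2 = 0 ∧ f n = a} ∪ {n | n % 2 = 1 ∧ g n = a},
      {n | n % 2 = 0 ∧ f n = !a} ∪ {n | n % 2 = 1 ∧ g n = !a},
      Set.finite_empty, Set.empty_disjoint _, Set.empty_disjoint _, ?_, ?_, ?_, ?_⟩
    · -- Disjoint X Y
      rw [Set.disjoint_left]
      rintro n (⟨h0, hfa⟩ | ⟨h1, hga⟩) (⟨h0', hfa'⟩ | ⟨h1', hga'⟩)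
      · exact absurd (hfa.symm.trans hfa') (by cases a <;> simp)
      · exact zero_ne_one (h0.symm.trans h1')
      · exact zero_ne_one (h0'.symm.trans h1)
      · exact absurd (hga.symm.trans hga') (by cases a <;> simp)
    · -- cover
      ext n
      simp only [Set.mem_union, Set.mem_setOf_eq, Set.mem_univ, iff_true,
        Set.mem_empty_iff_false, false_or]
      rcases Nat.mod_two_eq_zero_or_one n with h | h
      · rcases Bool.eq_or_eq_not (f n) a with hb' | hb'
        · exact Or.inl (Or.inl ⟨h, hb'⟩)
        · exact Or.inr (Or.inl ⟨h, hb'⟩)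
      · rcases Bool.eq_or_eq_not (g n) a with hb' | hb'
        · exact Or.inl (Or.inr ⟨h, hb'⟩)
        · exact Or.inr (Or.inr ⟨h, hb'⟩)
    · -- X linked in color a
      refine ⟨a, infLinked_of ?_ ?_ ?_⟩
      · -- even-even
        intro u hu v hv huv hu0 hv0
        have hfu : f u = a := by
          rcases hu with ⟨_, h⟩ | ⟨h1, _⟩
          · exact h
          · exact absurd (hu0.symm.trans h1) zero_ne_one
        have hfv : f v = a := by
          rcases hv with ⟨_, h⟩ | ⟨h1, _⟩
          · exact h
          · exact absurd (hv0.symm.trans h1) zero_ne_one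
        refine pl2 huv (meq hu0 hv0 rfl) ?_
        intro s
        have hT : ({w | w % 2 = 1 ∧ c u w = a} ∩ {w | w % 2 = 1 ∧ c v w = a}).Infinite :=
          hUinf (Filter.inter_mem (by rw [← hfu]; exact hfU u) (by rw [← hfv]; exact hfU v))
        obtain ⟨w, ⟨⟨hw1, hcu⟩, ⟨_, hcv⟩⟩, hws⟩ := hT.exists_notMem_finset s
        exact ⟨w, hws, mne10 hw1 hu0, Or.inl hcu, Or.inr hcv⟩
      · -- odd-odd
        intro u hu v hv huv hu1 hv1
        have hgu : g u = a := by
          rcases hu with ⟨h0, _⟩ | ⟨_, h⟩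
          · exact absurd (h0.symm.trans hu1) zero_ne_one
          · exact h
        have hgv : g v = a := by
          rcases hv with ⟨h0, _⟩ | ⟨_, h⟩
          · exact absurd (h0.symm.trans hv1) zero_ne_one
          · exact h
        refine pl2 huv (meq hu1 hv1 rfl) ?_
        intro s
        have hT : ({z | z % 2 = 0 ∧ c z u = a} ∩ {z | z % 2 = 0 ∧ c z v = a}).Infinite :=
          hWinf (Filter.inter_mem (by rw [← hgu]; exact hgW u) (by rw [← hgv]; exact hgW v))
        obtain ⟨z, ⟨⟨hz0, hcu⟩, ⟨_, hcv⟩⟩, hzs⟩ := hT.exists_notMem_finset s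
        exact ⟨z, hzs, mne01 hz0 hu1, Or.inr hcu, Or.inl hcv⟩
      · -- even-odd
        intro u hu v hv hu0 hv1
        have hfu : f u = a := by
          rcases hu with ⟨_, h⟩ | ⟨h1, _⟩
          · exact h
          · exact absurd (hu0.symm.trans h1) zero_ne_one
        have hgv : g v = a := by
          rcases hv with ⟨h0, _⟩ | ⟨_, h⟩
          · exact absurd (h0.symm.trans hv1) zero_ne_one
          · exact h
        refine pl3 (mne01 hu0 hv1) ?_
        intro s
        have hZ : ({z | z % 2 = 0 ∧ c z v = a} ∩ {z | z % 2 = 0 ∧ f z = a}).Infinite :=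
          hWinf (Filter.inter_mem (by rw [← hgv]; exact hgW v) haW)
        obtain ⟨z, ⟨⟨hz0, hczv⟩, ⟨_, hfz⟩⟩, hzs⟩ := hZ.exists_notMem_finset s
        have hWt : ({w | w % 2 = 1 ∧ c u w = a} ∩ {w | w % 2 = 1 ∧ c z w = a}).Infinite :=
          hUinf (Filter.inter_mem (by rw [← hfu]; exact hfU u) (by rw [← hfz]; exact hfU z))
        obtain ⟨w, ⟨⟨hw1, hcuw⟩, ⟨_, hczw⟩⟩, hws⟩ := hWt.exists_notMem_finset (s ∪ {z})
        simp only [Finset.mem_union, Finset.mem_singleton, not_or] at hws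
        exact ⟨w, z, hws.1, hzs, meq hw1 hv1 rfl, meq hz0 hu0 rfl,
          Or.inl hcuw, Or.inr hczw, Or.inl hczv⟩
    · -- Y linked in color !a
      refine ⟨!a, infLinked_of ?_ ?_ ?_⟩
      · intro u hu v hv huv hu0 hv0
        have hfu : f u = !a := by
          rcases hu with ⟨_, h⟩ | ⟨h1, _⟩
          · exact h
          · exact absurd (hu0.symm.trans h1) zero_ne_one
        have hfv : f v = !a := by
          rcases hv with ⟨_, h⟩ | ⟨h1, _⟩
          · exact h
          · exact absurd (hv0.symm.trans h1) zero_ne_one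
        refine pl2 huv (meq hu0 hv0 rfl) ?_
        intro s
        have hT : ({w | w % 2 = 1 ∧ c u w = !a} ∩ {w | w % 2 = 1 ∧ c v w = !a}).Infinite :=
          hUinf (Filter.inter_mem (by rw [← hfu]; exact hfU u) (by rw [← hfv]; exact hfU v))
        obtain ⟨w, ⟨⟨hw1, hcu⟩, ⟨_, hcv⟩⟩, hws⟩ := hT.exists_notMem_finset s
        exact ⟨w, hws, mne10 hw1 hu0, Or.inl hcu, Or.inr hcv⟩
      · intro u hu v hv huv hu1 hv1
        have hgu : g u = !a := by
          rcases hu with ⟨h0, _⟩ | ⟨_, h⟩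
          · exact absurd (h0.symm.trans hu1) zero_ne_one
          · exact h
        have hgv : g v = !a := by
          rcases hv with ⟨h0, _⟩ | ⟨_, h⟩
          · exact absurd (h0.symm.trans hv1) zero_ne_one
          · exact h
        refine pl2 huv (meq hu1 hv1 rfl) ?_
        intro s
        have hT : ({z | z % 2 = 0 ∧ c z u = !a} ∩ {z | z % 2 = 0 ∧ c z v = !a}).Infinite :=
          hWinf (Filter.inter_mem (by rw [← hgu]; exact hgW u) (by rw [← hgv]; exact hgW v))
        obtain ⟨z, ⟨⟨hz0, hcu⟩, ⟨_, hcv⟩⟩, hzs⟩ := hT.exists_notMem_finset s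
        exact ⟨z, hzs, mne01 hz0 hu1, Or.inr hcu, Or.inl hcv⟩
      · intro u hu v hv hu0 hv1
        have hfu : f u = !a := by
          rcases hu with ⟨_, h⟩ | ⟨h1, _⟩
          · exact h
          · exact absurd (hu0.symm.trans h1) zero_ne_one
        have hgv : g v = !a := by
          rcases hv with ⟨h0, _⟩ | ⟨_, h⟩
          · exact absurd (h0.symm.trans hv1) zero_ne_one
          · exact h
        refine pl3 (mne01 hu0 hv1) ?_
        intro s
        have hWt : ({w | w % 2 = 1 ∧ c u w = !a} ∩ {v' | v' % 2 = 1 ∧ g v' = !a}).Infinite :=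
          hUinf (Filter.inter_mem (by rw [← hfu]; exact hfU u) hbU)
        obtain ⟨w, ⟨⟨hw1, hcuw⟩, ⟨_, hgw⟩⟩, hws⟩ := hWt.exists_notMem_finset s
        have hZ : ({z | z % 2 = 0 ∧ c z w = !a} ∩ {z | z % 2 = 0 ∧ c z v = !a}).Infinite :=
          hWinf (Filter.inter_mem (by rw [← hgw]; exact hgW w) (by rw [← hgv]; exact hgW v))
        obtain ⟨z, ⟨⟨hz0, hczw⟩, ⟨_, hczv⟩⟩, hzs⟩ := hZ.exists_notMem_finset (s ∪ {w})
        simp only [Finset.mem_union, Finset.mem_singleton, not_or] at hzs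
        exact ⟨w, z, hws, hzs.1, meq hw1 hv1 rfl, meq hz0 hu0 rfl,
          Or.inl hcuw, Or.inr hczw, Or.inl hczv⟩

end Main
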